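/- Let q be an element of a field F that is a primitive m-th root of unity for a positive integer m. Then for all non-negative integers k and j, the Gaussian binomial coefficient [km choose jm]_q equals the ordinary binomial coefficient C(k, j) (as an element of F). -/

import Mathlib

open Polynomial Finset

private lemma gb_dvd : ∀ (n r : ℕ),
    (∏ i ∈ range r, ((X:ℤ[X]) ^ (i + 1) - 1)) ∣ ∏ i ∈ range r, ((X:ℤ[X]) ^ (n - i) - 1)
  | 0, 0 => by simp
  | 0, r + 1 => by
      have hz : ∏ i ∈ range (r + 1), ((X:ℤ[X]) ^ (0 - i) - 1) = 0 :=
        Finset.prod_eq_zero (Finset.self_mem_range_succ r)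
          (by rw [Nat.zero_sub, pow_zero, sub_self])
      exact hz ▸ dvd_zero _
  | n + 1, 0 => by simp
  | n + 1, s + 1 => by
      rcases le_or_gt (s + 1) (n + 1) with h | h
      · have key : ∏ i ∈ range (s + 1), ((X:ℤ[X]) ^ (n + 1 - i) - 1) =
            (∏ i ∈ range s, ((X:ℤ[X]) ^ (n - i) - 1)) * (X ^ (s + 1) - 1)
              + X ^ (s + 1) * ∏ i ∈ range (s + 1), ((X:ℤ[X]) ^ (n - i) - 1) := by
          rw [Finset.prod_range_succ' (fun i => (X:ℤ[X]) ^ (n + 1 - i) - 1)]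
          simp only [Nat.add_sub_cancel, Nat.sub_zero]
          have h1 : ∀ i : ℕ, n + 1 - (i + 1) = n - i := fun i => by omega
          simp only [h1]
          have h2 : (X:ℤ[X]) ^ (n + 1) - 1 = (X ^ (s + 1) - 1) + X ^ (s + 1) * (X ^ (n - s) - 1) := by
            rw [mul_sub, ← pow_add]
            have : s + 1 + (n - s) = n + 1 := by omega
            rw [this]; ring
          rw [h2, Finset.prod_range_succ (fun i => (X:ℤ[X]) ^ (n - i) - 1)]
          ring
        rw [key]
        refine dvd_add ?_ (Dvd.dvd.mul_left ?_ _)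
        · rw [Finset.prod_range_succ (fun i => (X:ℤ[X]) ^ (i + 1) - 1)]
          exact mul_dvd_mul (gb_dvd n s) dvd_rfl
        · exact gb_dvd n (s + 1)
      · have hz : ∏ i ∈ range (s + 1), ((X:ℤ[X]) ^ (n + 1 - i) - 1) = 0 :=
          Finset.prod_eq_zero (show n + 1 ∈ range (s + 1) from Finset.mem_range.2 h)
            (by rw [Nat.sub_self, pow_zero, sub_self])
        exact hz ▸ dvd_zero _

private lemma gb_denom_factor (m : ℕ) (hm : 0 < m) : ∀ j : ℕ,
    ∏ i ∈ range (j * m), ((X:ℤ[X]) ^ (i + 1) - 1) =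
      ((X:ℤ[X]) ^ m - 1) ^ j * ∏ a ∈ range j,
        ((∑ i ∈ range (a + 1), (X:ℤ[X]) ^ (m * i)) *
          ∏ b ∈ range (m - 1), ((X:ℤ[X]) ^ (a * m + (b + 1)) - 1))
  | 0 => by simp
  | j + 1 => by
      rw [add_mul, one_mul, Finset.prod_range_add, gb_denom_factor m hm j,
        Finset.prod_range_succ, pow_succ]
      have hblock : ∏ b ∈ range m, ((X:ℤ[X]) ^ (j * m + b + 1) - 1) =
          (((X:ℤ[X]) ^ m - 1)) * ((∑ i ∈ range (j + 1), (X:ℤ[X]) ^ (m * i)) *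
            ∏ b ∈ range (m - 1), ((X:ℤ[X]) ^ (j * m + (b + 1)) - 1)) := by
        obtain ⟨n, rfl⟩ : ∃ n, m = n + 1 := ⟨m - 1, by omega⟩
        rw [Finset.prod_range_succ]
        have h1 : (X:ℤ[X]) ^ (j * (n + 1) + n + 1) - 1 =
            ((X:ℤ[X]) ^ (n + 1) - 1) * ∑ i ∈ range (j + 1), (X:ℤ[X]) ^ ((n + 1) * i) := by
          have := geom_sum_mul ((X:ℤ[X]) ^ (n + 1)) (j + 1)
          rw [← pow_mul] at this
          rw [show j * (n + 1) + n + 1 = (n + 1) * (j + 1) by ring, ← this]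
          simp only [← pow_mul]
          ring
        rw [h1]
        simp only [Nat.add_sub_cancel, ← add_assoc]
        ring
      rw [hblock]
      ring

private lemma gb_num_factor (m : ℕ) (hm : 0 < m) (k : ℕ) : ∀ j : ℕ, j ≤ k →
    ∏ i ∈ range (j * m), ((X:ℤ[X]) ^ (k * m - i) - 1) =
      ((X:ℤ[X]) ^ m - 1) ^ j * ∏ a ∈ range j,
        ((∑ i ∈ range (k - a), (X:ℤ[X]) ^ (m * i)) *
          ∏ b ∈ range (m - 1), ((X:ℤ[X]) ^ ((k - a) * m - (b + 1)) - 1))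
  | 0, _ => by simp
  | j + 1, hj => by
      rw [add_mul, one_mul, Finset.prod_range_add, gb_num_factor m hm k j (by omega),
        Finset.prod_range_succ, pow_succ]
      have hexp : ∀ b : ℕ, k * m - (j * m + b) = (k - j) * m - b := by
        intro b
        rw [Nat.sub_mul, Nat.sub_sub]
      have hblock : ∏ b ∈ range m, ((X:ℤ[X]) ^ (k * m - (j * m + b)) - 1) =
          (((X:ℤ[X]) ^ m - 1)) * ((∑ i ∈ range (k - j), (X:ℤ[X]) ^ (m * i)) *
            ∏ b ∈ range (m - 1), ((X:ℤ[X]) ^ ((k - j) * m - (b + 1)) - 1)) := by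
        simp only [hexp]
        obtain ⟨n, rfl⟩ : ∃ n, m = n + 1 := ⟨m - 1, by omega⟩
        rw [Finset.prod_range_succ' (fun b => (X:ℤ[X]) ^ ((k - j) * (n + 1) - b) - 1)]
        have h1 : (X:ℤ[X]) ^ ((k - j) * (n + 1) - 0) - 1 =
            ((X:ℤ[X]) ^ (n + 1) - 1) * ∑ i ∈ range (k - j), (X:ℤ[X]) ^ ((n + 1) * i) := by
          have := geom_sum_mul ((X:ℤ[X]) ^ (n + 1)) (k - j)
          rw [← pow_mul] at this
          rw [Nat.sub_zero, show (k - j) * (n + 1) = (n + 1) * (k - j) by ring, ← this]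
          simp only [← pow_mul]
          ring
        rw [h1]
        simp only [Nat.add_sub_cancel]
        ring
      rw [hblock]
      ring

open Complex in
private lemma gb_cyclotomic_dvd (m : ℕ) (hm : 0 < m) (k j : ℕ) (hjk : j ≤ k) :
    Polynomial.cyclotomic m ℤ ∣
      ((∏ i ∈ range (j * m), ((X:ℤ[X]) ^ (k * m - i) - 1)) /ₘ
        (∏ i ∈ range (j * m), ((X:ℤ[X]) ^ (i + 1) - 1))) -
      (Nat.choose k j : ℤ[X]) := by
  set N : ℤ[X] := ∏ i ∈ range (j * m), ((X:ℤ[X]) ^ (k * m - i) - 1) with hN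
  set D : ℤ[X] := ∏ i ∈ range (j * m), ((X:ℤ[X]) ^ (i + 1) - 1) with hD
  set G : ℤ[X] := N /ₘ D with hG
  have hDmonic : D.Monic := by
    refine monic_prod_of_monic _ _ (fun i _ => ?_)
    have := monic_X_pow_sub_C (1 : ℤ) (Nat.succ_ne_zero i)
    simpa using this
  have hDG : D * G = N := by
    have h0 := modByMonic_add_div N D
    rwa [(modByMonic_eq_zero_iff_dvd hDmonic).2 (gb_dvd (k * m) (j * m)), zero_add] at h0
  -- factorizations
  have hNf := gb_num_factor m hm k j hjk
  have hDf := gb_denom_factor m hm j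
  rw [← hN] at hNf
  rw [← hD] at hDf
  set A : ℤ[X] := ∏ a ∈ range j,
      ((∑ i ∈ range (k - a), (X:ℤ[X]) ^ (m * i)) *
        ∏ b ∈ range (m - 1), ((X:ℤ[X]) ^ ((k - a) * m - (b + 1)) - 1)) with hA
  set B : ℤ[X] := ∏ a ∈ range j,
      ((∑ i ∈ range (a + 1), (X:ℤ[X]) ^ (m * i)) *
        ∏ b ∈ range (m - 1), ((X:ℤ[X]) ^ (a * m + (b + 1)) - 1)) with hB
  have hcancel : A = B * G := by
    have hx : ((X:ℤ[X]) ^ m - 1) ^ j ≠ 0 := by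
      refine pow_ne_zero _ (fun h => ?_)
      have := congrArg (Polynomial.eval 0) h
      simp [zero_pow hm.ne'] at this
    refine mul_left_cancel₀ hx ?_
    rw [← hNf, ← hDG, hDf]
    ring
  -- evaluate at a primitive root in ℂ
  set ζ : ℂ := Complex.exp (2 * Real.pi * I / m) with hζdef
  have hζ : IsPrimitiveRoot ζ m := Complex.isPrimitiveRoot_exp m hm.ne'
  set P : ℂ := ∏ b ∈ range (m - 1), (ζ ^ (b + 1) - 1) with hP
  have hAval : (aeval ζ) A = (Nat.descFactorial k j : ℂ) * P ^ j := by
    rw [hA, map_prod]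
    have hblk : ∀ a ∈ range j, (aeval ζ) ((∑ i ∈ range (k - a), (X:ℤ[X]) ^ (m * i)) *
          ∏ b ∈ range (m - 1), ((X:ℤ[X]) ^ ((k - a) * m - (b + 1)) - 1)) =
        ((k - a : ℕ) : ℂ) * P := by
      intro a ha
      rw [map_mul, map_sum, map_prod]
      have h1 : ∀ i ∈ range (k - a), (aeval ζ) ((X:ℤ[X]) ^ (m * i)) = 1 := by
        intro i _
        simp [pow_mul, hζ.pow_eq_one]
      rw [Finset.sum_congr rfl h1, Finset.sum_const, Finset.card_range]
      have h2 : ∀ b ∈ range (m - 1),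
          (aeval ζ) ((X:ℤ[X]) ^ ((k - a) * m - (b + 1)) - 1) = ζ ^ ((m - 1) - b) - 1 := by
        intro b hb
        have hb' : b < m - 1 := Finset.mem_range.1 hb
        have hka : 1 ≤ k - a := by have := Finset.mem_range.1 ha; omega
        have hexp : (k - a) * m - (b + 1) = m * (k - a - 1) + ((m - 1) - b) := by
          obtain ⟨c, hc⟩ : ∃ c, k - a = c + 1 := ⟨k - a - 1, by omega⟩
          rw [hc, add_mul, one_mul, Nat.add_sub_assoc (by omega), Nat.add_sub_cancel]
          have : m - (b + 1) = m - 1 - b := by omega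
          rw [this, mul_comm]
        rw [map_sub, map_one, map_pow, aeval_X, hexp, pow_add, pow_mul, hζ.pow_eq_one,
          one_pow, one_mul]
      rw [Finset.prod_congr rfl h2]
      have h3 : ∏ b ∈ range (m - 1), (ζ ^ ((m - 1) - b) - 1) = P := by
        rw [hP]
        calc ∏ b ∈ range (m - 1), (ζ ^ ((m - 1) - b) - 1)
            = ∏ b ∈ range (m - 1), (ζ ^ ((m - 1 - 1 - b) + 1) - 1) :=
              Finset.prod_congr rfl (fun b hb => by
                have := Finset.mem_range.1 hb; congr 2; omega)
          _ = ∏ b ∈ range (m - 1), (ζ ^ (b + 1) - 1) :=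
              Finset.prod_range_reflect (fun b => ζ ^ (b + 1) - 1) (m - 1)
      rw [h3]
      simp
    rw [Finset.prod_congr rfl hblk, Finset.prod_mul_distrib, Finset.prod_const,
      Finset.card_range, Nat.descFactorial_eq_prod_range]
    push_cast
    ring
  have hBval : (aeval ζ) B = ((Nat.factorial j : ℕ) : ℂ) * P ^ j := by
    rw [hB, map_prod]
    have hblk : ∀ a ∈ range j, (aeval ζ) ((∑ i ∈ range (a + 1), (X:ℤ[X]) ^ (m * i)) *
          ∏ b ∈ range (m - 1), ((X:ℤ[X]) ^ (a * m + (b + 1)) - 1)) =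
        ((a + 1 : ℕ) : ℂ) * P := by
      intro a _
      rw [map_mul, map_sum, map_prod]
      have h1 : ∀ i ∈ range (a + 1), (aeval ζ) ((X:ℤ[X]) ^ (m * i)) = 1 := by
        intro i _
        simp [pow_mul, hζ.pow_eq_one]
      rw [Finset.sum_congr rfl h1, Finset.sum_const, Finset.card_range]
      have h2 : ∀ b ∈ range (m - 1),
          (aeval ζ) ((X:ℤ[X]) ^ (a * m + (b + 1)) - 1) = ζ ^ (b + 1) - 1 := by
        intro b _
        rw [map_sub, map_one, map_pow, aeval_X, pow_add, mul_comm a m, pow_mul,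
          hζ.pow_eq_one, one_pow, one_mul]
      rw [Finset.prod_congr rfl h2, ← hP]
      simp
    rw [Finset.prod_congr rfl hblk, Finset.prod_mul_distrib, Finset.prod_const,
      Finset.card_range, ← Finset.prod_range_add_one_eq_factorial]
    push_cast
    ring
  have hPne : P ≠ 0 := by
    rw [hP]
    refine Finset.prod_ne_zero_iff.2 (fun b hb => ?_)
    have hb' : b < m - 1 := Finset.mem_range.1 hb
    exact sub_ne_zero.2 (hζ.pow_ne_one_of_pos_of_lt (by omega) (by omega))
  have hmapped : (Nat.descFactorial k j : ℂ) * P ^ j = (((Nat.factorial j : ℕ) : ℂ) * P ^ j) * (aeval ζ) G := by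
    rw [← hAval, ← hBval, ← map_mul, ← hcancel]
  have hd : (Nat.descFactorial k j : ℂ) = ((Nat.factorial j : ℕ) : ℂ) * (k.choose j : ℂ) := by
    rw [Nat.descFactorial_eq_factorial_mul_choose]
    push_cast
    ring
  have hGval : (aeval ζ) G = (Nat.choose k j : ℂ) := by
    have h1 : (((Nat.factorial j : ℕ) : ℂ) * P ^ j) * (aeval ζ) G = (((Nat.factorial j : ℕ) : ℂ) * P ^ j) * (Nat.choose k j : ℂ) := by
      linear_combination -hmapped + P ^ j * hd
    exact mul_left_cancel₀
      (mul_ne_zero (Nat.cast_ne_zero.2 (Nat.factorial_ne_zero j)) (pow_ne_zero _ hPne)) h1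
  -- conclude divisibility over ℤ
  have hzero : (aeval ζ) (G - (Nat.choose k j : ℤ[X])) = 0 := by
    rw [map_sub, hGval, map_natCast, sub_self]
  have hQ : Polynomial.cyclotomic m ℚ ∣
      (G - (Nat.choose k j : ℤ[X])).map (Int.castRingHom ℚ) := by
    rw [cyclotomic_eq_minpoly_rat hζ hm]
    refine minpoly.dvd ℚ ζ ?_
    rw [show (Int.castRingHom ℚ) = algebraMap ℤ ℚ from rfl, aeval_map_algebraMap]
    exact hzero
  rw [← map_cyclotomic_int m ℚ] at hQ
  exact (map_dvd_map _ Int.cast_injective (cyclotomic.monic m ℤ)).1 hQ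

open Polynomial in
/-- The Gaussian binomial coefficient `[k choose j]_t`, as a polynomial in `ℤ[t]`: the exact
quotient `((t^k−1)(t^{k−1}−1)⋯(t^{k−j+1}−1)) / ((t^j−1)(t^{j−1}−1)⋯(t−1))`. -/
noncomputable def gaussBinomial (k j : ℕ) : Polynomial ℤ :=
  (∏ i ∈ Finset.range j, (X ^ (k - i) - 1)) /ₘ (∏ i ∈ Finset.range j, (X ^ (i + 1) - 1))

/-- If `q` is a primitive `m`-th root of unity in a field `F`, then for all `k, j ≥ 0` the
Gaussian binomial coefficient `[km choose jm]_q` equals the ordinary binomial coefficient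
`C(k,j)`, as an element of `F`. -/
theorem gaussBinomial_mul_primitiveRoot_eq_choose {F : Type*} [Field F]
    (m : ℕ) (hm : 0 < m) (q : F) (hq : IsPrimitiveRoot q m) (k j : ℕ) :
    Polynomial.aeval q (gaussBinomial (k * m) (j * m)) = (Nat.choose k j : F) := by
  rcases le_or_gt j k with hjk | hkj
  · obtain ⟨W, hW⟩ := gb_cyclotomic_dvd m hm k j hjk
    have heq : gaussBinomial (k * m) (j * m) - (Nat.choose k j : ℤ[X]) =
        Polynomial.cyclotomic m ℤ * W := hW
    have happ := congrArg (aeval q : ℤ[X] →ₐ[ℤ] F) heq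
    rw [map_sub, map_mul, map_natCast] at happ
    have hc : (aeval q) (Polynomial.cyclotomic m ℤ) = 0 := by
      rw [aeval_def, eval₂_eq_eval_map, algebraMap_int_eq, map_cyclotomic_int]
      exact hq.isRoot_cyclotomic hm
    rw [hc, zero_mul, sub_eq_zero] at happ
    exact happ
  · have hlt : k * m < j * m := (Nat.mul_lt_mul_right hm).2 hkj
    have hN : ∏ i ∈ range (j * m), ((X:ℤ[X]) ^ (k * m - i) - 1) = 0 :=
      Finset.prod_eq_zero (show k * m ∈ range (j * m) from Finset.mem_range.2 hlt)
        (by rw [Nat.sub_self, pow_zero, sub_self])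
    have h0 : gaussBinomial (k * m) (j * m) = 0 := by
      unfold gaussBinomial
      rw [hN, zero_divByMonic]
    rw [h0, map_zero, Nat.choose_eq_zero_of_lt hkj, Nat.cast_zero]
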